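/- Let A be a θ-Hölder potential on Ω with dual potential A* on Ω* and bounded involution kernel W. Define ρ = lim_n sup_{x'∈Ω} (∫dx₁…∫dxₙ e^{Re Aⁿ(x₁…xₙx')})^{1/n} and ρ* = lim_n sup_{y'∈Ω*} (∫dy₁…∫dyₙ e^{Re (A*)ⁿ(y'y₁…yₙ)})^{1/n}, where integration is over an a priori probability measure ν on {1,…,d}. Then ρ = ρ*. -/

import Mathlib

open scoped BigOperators
open Filter Topology

noncomputable section

/-- The one-sided shift space on `d` symbols (also used for the backwards copy `Ω*`). -/
abbrev Bsp (d : ℕ) := ℕ → Fin d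

/-- `agree n x x'` : the first `n` coordinates of `x` and `x'` coincide (`x ∼ₙ x'`). -/
def agree {d : ℕ} (n : ℕ) (x x' : Bsp d) : Prop := ∀ i < n, x i = x' i

/-- `C` is a `θ`-Hölder constant for `f`. -/
def HolderC {d : ℕ} {E : Type*} [SeminormedAddGroup E] (θ : ℝ) (f : Bsp d → E) (C : ℝ) : Prop :=
  ∀ (n : ℕ) (x x' : Bsp d), agree n x x' → ‖f x - f x'‖ ≤ C * θ ^ n

/-- `C` is a `θ`-Hölder constant for a two-variable kernel on `X = Ω* × Ω`. -/
def HolderC2 {d : ℕ} (θ : ℝ) (k : Bsp d → Bsp d → ℂ) (C : ℝ) : Prop :=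
  ∀ (n : ℕ) (y y' x x' : Bsp d), agree n y y' → agree n x x' →
    ‖k y x - k y' x'‖ ≤ C * θ ^ n

/-- The one-sided shift `σ` (same formula for `σ*` on the backwards copy). -/
def shift {d : ℕ} (x : Bsp d) : Bsp d := fun i => x (i + 1)

/-- Prepend one symbol: `cons a x = (a x)` (for `Ω*` this appends `a` as the new `y₁`). -/
def cons {d : ℕ} (a : Fin d) (x : Bsp d) : Bsp d := fun n => if n = 0 then a else x (n - 1)

/-- `prep y k x = (y_k … y_1 x)` : prepend the first `k` symbols of `y` (in reversed order) to `x`. -/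
def prep {d : ℕ} (y : Bsp d) (k : ℕ) (x : Bsp d) : Bsp d :=
  fun n => if n < k then y (k - 1 - n) else x (n - k)

/-- `prepW s x = (x₁ … xₙ x)` where `s i = x_{i+1}`. -/
def prepW {d n : ℕ} (s : Fin n → Fin d) (x : Bsp d) : Bsp d :=
  fun m => if h : m < n then s ⟨m, h⟩ else x (m - n)

/-- `appW y s = (y x₁ … xₙ) ∈ Ω*` where `s i = x_{i+1}` (so the new `y₁` is `xₙ`). -/
def appW {d n : ℕ} (y : Bsp d) (s : Fin n → Fin d) : Bsp d :=
  fun m => if h : m < n then s ⟨n - 1 - m, by omega⟩ else y (m - n)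

/-- Birkhoff sum `Aⁿ(x) = Σ_{k<n} A(σᵏ x)`. -/
def birkhoff {d : ℕ} (A : Bsp d → ℂ) (n : ℕ) (x : Bsp d) : ℂ :=
  ∑ k ∈ Finset.range n, A (fun i => x (i + k))

/-- Ruelle operator with a priori probability weights `w` on the symbols. -/
def Ruelle {d : ℕ} (w : Fin d → ℝ) (A : Bsp d → ℂ) (φ : Bsp d → ℂ) (x : Bsp d) : ℂ :=
  ∑ a : Fin d, (w a : ℂ) * (Complex.exp (A (cons a x)) * φ (cons a x))

/-- Koopman operator `U_B φ = e^B · (φ ∘ σ)`. -/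
def Koop {d : ℕ} (B : Bsp d → ℂ) (φ : Bsp d → ℂ) (x : Bsp d) : ℂ :=
  Complex.exp (B x) * φ (shift x)

/-- The measures `D_{n,x'}` paired against `φ`, with reference symbol `o` (for `0^∞`). -/
def Dn {d : ℕ} (w : Fin d → ℝ) (A : Bsp d → ℂ) (W : Bsp d → Bsp d → ℂ) (ψ : Bsp d → ℂ)
    (lam : ℂ) (o : Fin d) (n : ℕ) (x' : Bsp d) (φ : Bsp d → ℂ) : ℂ :=
  ∑ s : Fin n → Fin d, ((∏ i, w (s i) : ℝ) : ℂ) *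
    (ψ (prepW s x') * (Complex.exp (birkhoff A n (prepW s x')) / lam ^ n) *
      Complex.exp (-(W (appW (fun _ => o) s) x')) * φ (appW (fun _ => o) s))

/-- `ρ = ρ*` — the upper bounds of the spectral radii of `L_A` and
`L_{A*}`, defined through the limits of n-th roots of the integrals of
`e^{Re Aⁿ}` resp. `e^{Re (A*)ⁿ}`, coincide (for a bounded involution kernel `W`). -/
theorem rho_eq_rho_star {d : ℕ} (hd : 0 < d) (w : Fin d → ℝ)
    (hw : ∀ a, 0 ≤ w a) (hw1 : ∑ a, w a = 1)
    (A : Bsp d → ℂ) (Astar : Bsp d → ℂ) (W : Bsp d → Bsp d → ℂ) (M : ℝ)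
    (hM : ∀ y x, |(W y x).re| ≤ M)
    (hker : ∀ (n : ℕ) (x' y' : Bsp d) (s : Fin n → Fin d),
      birkhoff A n (prepW s x') =
        W (appW y' s) x' - W y' (prepW s x') + birkhoff Astar n (appW y' s))
    (ρ ρstar : ℝ)
    (hρ : Filter.Tendsto
      (fun n : ℕ => (⨆ x' : Bsp d, ∑ s : Fin n → Fin d,
        (∏ i, w (s i)) * Real.exp ((birkhoff A n (prepW s x')).re)) ^ ((n : ℝ)⁻¹))
      Filter.atTop (nhds ρ))
    (hρs : Filter.Tendsto
      (fun n : ℕ => (⨆ y' : Bsp d, ∑ s : Fin n → Fin d,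
        (∏ i, w (s i)) * Real.exp ((birkhoff Astar n (appW y' s)).re)) ^ ((n : ℝ)⁻¹))
      Filter.atTop (nhds ρstar)) :
    ρ = ρstar := by
  have hne : Nonempty (Bsp d) := ⟨fun _ => ⟨0, hd⟩⟩
  set c : ℝ := Real.exp (2 * M) with hc
  have hcpos : 0 < c := Real.exp_pos _
  set f : (n : ℕ) → Bsp d → ℝ := fun n x' => ∑ s : Fin n → Fin d,
      (∏ i, w (s i)) * Real.exp ((birkhoff A n (prepW s x')).re) with hf
  set g : (n : ℕ) → Bsp d → ℝ := fun n y' => ∑ s : Fin n → Fin d,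
      (∏ i, w (s i)) * Real.exp ((birkhoff Astar n (appW y' s)).re) with hg
  -- pointwise key inequalities
  have hprod : ∀ (n : ℕ) (s : Fin n → Fin d), (0:ℝ) ≤ ∏ i, w (s i) := fun n s =>
    Finset.prod_nonneg fun i _ => hw (s i)
  have keyexp : ∀ (n : ℕ) (x' y' : Bsp d) (s : Fin n → Fin d),
      Real.exp ((birkhoff A n (prepW s x')).re)
        ≤ c * Real.exp ((birkhoff Astar n (appW y' s)).re) := by
    intro n x' y' s
    have h := hker n x' y' s
    have hre : (birkhoff A n (prepW s x')).re =
        (W (appW y' s) x').re - (W y' (prepW s x')).re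
          + (birkhoff Astar n (appW y' s)).re := by
      rw [h]; simp [Complex.add_re, Complex.sub_re]
    rw [hre, ← Real.exp_add]
    apply Real.exp_le_exp.2
    have h1 := abs_le.1 (hM (appW y' s) x')
    have h2 := abs_le.1 (hM y' (prepW s x'))
    linarith [h1.2, h2.1]
  have keyexp' : ∀ (n : ℕ) (x' y' : Bsp d) (s : Fin n → Fin d),
      Real.exp ((birkhoff Astar n (appW y' s)).re)
        ≤ c * Real.exp ((birkhoff A n (prepW s x')).re) := by
    intro n x' y' s
    have h := hker n x' y' s
    have hre : (birkhoff Astar n (appW y' s)).re =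
        (W y' (prepW s x')).re - (W (appW y' s) x').re
          + (birkhoff A n (prepW s x')).re := by
      have : birkhoff Astar n (appW y' s) =
          W y' (prepW s x') - W (appW y' s) x' + birkhoff A n (prepW s x') := by
        rw [h]; ring
      rw [this]; simp [Complex.add_re, Complex.sub_re]
    rw [hre, ← Real.exp_add]
    apply Real.exp_le_exp.2
    have h1 := abs_le.1 (hM (appW y' s) x')
    have h2 := abs_le.1 (hM y' (prepW s x'))
    linarith [h1.1, h2.2]
  have key : ∀ (n : ℕ) (x' y' : Bsp d), f n x' ≤ c * g n y' := by
    intro n x' y'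
    rw [hf, hg]; simp only
    rw [Finset.mul_sum]
    refine Finset.sum_le_sum fun s _ => ?_
    rw [mul_comm c, mul_assoc]
    exact mul_le_mul_of_nonneg_left (by rw [mul_comm]; exact keyexp n x' y' s) (hprod n s)
  have key' : ∀ (n : ℕ) (x' y' : Bsp d), g n y' ≤ c * f n x' := by
    intro n x' y'
    rw [hf, hg]; simp only
    rw [Finset.mul_sum]
    refine Finset.sum_le_sum fun s _ => ?_
    rw [mul_comm c, mul_assoc]
    exact mul_le_mul_of_nonneg_left (by rw [mul_comm]; exact keyexp' n x' y' s) (hprod n s)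
  have hfnonneg : ∀ n x', 0 ≤ f n x' := fun n x' =>
    Finset.sum_nonneg fun s _ => mul_nonneg (hprod n s) (Real.exp_pos _).le
  have hgnonneg : ∀ n y', 0 ≤ g n y' := fun n y' =>
    Finset.sum_nonneg fun s _ => mul_nonneg (hprod n s) (Real.exp_pos _).le
  have hbddg : ∀ n, BddAbove (Set.range (g n)) := by
    intro n
    exact ⟨c * f n (Classical.arbitrary _), by
      rintro _ ⟨y', rfl⟩; exact key' n _ y'⟩
  have hbddf : ∀ n, BddAbove (Set.range (f n)) := by
    intro n
    exact ⟨c * g n (Classical.arbitrary _), by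
      rintro _ ⟨x', rfl⟩; exact key n x' _⟩
  -- sup inequalities
  have hS : ∀ n, (⨆ x', f n x') ≤ c * ⨆ y', g n y' := by
    intro n
    refine ciSup_le fun x' => ?_
    calc f n x' ≤ c * g n x' := key n x' x'
    _ ≤ c * ⨆ y', g n y' :=
      mul_le_mul_of_nonneg_left (le_ciSup (hbddg n) x') hcpos.le
  have hT : ∀ n, (⨆ y', g n y') ≤ c * ⨆ x', f n x' := by
    intro n
    refine ciSup_le fun y' => ?_
    calc g n y' ≤ c * f n y' := key' n y' y'
    _ ≤ c * ⨆ x', f n x' :=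
      mul_le_mul_of_nonneg_left (le_ciSup (hbddf n) y') hcpos.le
  have hSnonneg : ∀ n, (0:ℝ) ≤ ⨆ x', f n x' := fun n =>
    le_trans (hfnonneg n (Classical.arbitrary _)) (le_ciSup (hbddf n) _)
  have hTnonneg : ∀ n, (0:ℝ) ≤ ⨆ y', g n y' := fun n =>
    le_trans (hgnonneg n (Classical.arbitrary _)) (le_ciSup (hbddg n) _)
  -- c^(1/n) → 1
  have hc1 : Filter.Tendsto (fun n : ℕ => c ^ ((n:ℝ)⁻¹)) Filter.atTop (nhds 1) := by
    have heq : ∀ n : ℕ, c ^ ((n:ℝ)⁻¹) = Real.exp (2 * M * (n:ℝ)⁻¹) := by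
      intro n
      rw [hc, ← Real.exp_mul]
    simp only [heq]
    have : Filter.Tendsto (fun n : ℕ => 2 * M * (n:ℝ)⁻¹) Filter.atTop (nhds 0) := by
      have := tendsto_inv_atTop_nhds_zero_nat.const_mul (2 * M)
      simpa using this
    simpa [Function.comp_def] using (Real.continuous_exp.tendsto 0).comp this
  -- ρ ≤ ρstar
  have h1 : ρ ≤ ρstar := by
    have hle : ∀ n : ℕ,
        (⨆ x', f n x') ^ ((n:ℝ)⁻¹) ≤ c ^ ((n:ℝ)⁻¹) * (⨆ y', g n y') ^ ((n:ℝ)⁻¹) := by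
      intro n
      rw [← Real.mul_rpow hcpos.le (hTnonneg n)]
      exact Real.rpow_le_rpow (hSnonneg n) (hS n) (by positivity)
    have hlim : Filter.Tendsto
        (fun n : ℕ => c ^ ((n:ℝ)⁻¹) * (⨆ y', g n y') ^ ((n:ℝ)⁻¹))
        Filter.atTop (nhds (1 * ρstar)) := hc1.mul hρs
    have := le_of_tendsto_of_tendsto' hρ hlim hle
    linarith
  have h2 : ρstar ≤ ρ := by
    have hle : ∀ n : ℕ,
        (⨆ y', g n y') ^ ((n:ℝ)⁻¹) ≤ c ^ ((n:ℝ)⁻¹) * (⨆ x', f n x') ^ ((n:ℝ)⁻¹) := by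
      intro n
      rw [← Real.mul_rpow hcpos.le (hSnonneg n)]
      exact Real.rpow_le_rpow (hTnonneg n) (hT n) (by positivity)
    have hlim : Filter.Tendsto
        (fun n : ℕ => c ^ ((n:ℝ)⁻¹) * (⨆ x', f n x') ^ ((n:ℝ)⁻¹))
        Filter.atTop (nhds (1 * ρ)) := hc1.mul hρ
    have := le_of_tendsto_of_tendsto' hρs hlim hle
    linarith
  linarith
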